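/- For every integer n ≥ 1 and all real numbers α and θ, the sum over all set partitions P of {1,…,n} of the weight W(P) := [∏_{i=0}^{#P−1} (θ + i·α)] · ∏_{b ∈ P} ∏_{i=1}^{#b−1} (i − α) equals the rising factorial θ^{↑n} = θ(θ+1)⋯(θ+n−1). (This is the normalization of Pitman's two-parameter (α,θ) partition distribution P_n(B;α,θ) = (θ/α)^{↑#B} ∏_{b∈B} (−(−α)^{↑#b}) / θ^{↑n}, written without dividing by α.) -/

import Mathlib

/-- The rising factorial `x^{↑n} = x(x+1)⋯(x+n−1)`. -/
def risingFactorial (x : ℝ) (n : ℕ) : ℝ := ∏ i ∈ Finset.range n, (x + i)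

open Finset

namespace PitmanAux

variable {X : Type*} [DecidableEq X] {s : Finset X} {a : X}

/-- The Pitman weight of a finpartition. -/
noncomputable def W (α θ : ℝ) {s : Finset X} (P : Finpartition s) : ℝ :=
  (∏ i ∈ Finset.range P.parts.card, (θ + i * α)) *
    ∏ b ∈ P.parts, ∏ i ∈ Finset.range (b.card - 1), ((i : ℝ) + 1 - α)

lemma not_mem_of_mem_parts {P : Finpartition s} {b : Finset X} (hb : b ∈ P.parts)
    (ha : a ∉ s) : a ∉ b := fun h => ha (P.le hb h)

lemma avoid_parts_of_mem {P : Finpartition s} {b : Finset X} (hb : b ∈ P.parts) :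
    (P.avoid b).parts = P.parts.erase b := by
  ext c
  rw [Finpartition.mem_avoid, mem_erase]
  constructor
  · rintro ⟨d, hd, hdb, rfl⟩
    have hne : d ≠ b := fun h => hdb (h ▸ le_rfl)
    have hdis : Disjoint b d := (P.disjoint hd hb hne).symm
    rw [hdis.sdiff_eq_right]
    exact ⟨hne, hd⟩
  · rintro ⟨hcb, hc⟩
    have hdis : Disjoint c b := P.disjoint hc hb hcb
    refine ⟨c, hc, fun hle => P.ne_bot hc (hdis.eq_bot_of_le hle), hdis.symm.sdiff_eq_right⟩

/-- Add `a` as a new singleton block. -/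
def addSingleton (P : Finpartition s) (ha : a ∉ s) : Finpartition (insert a s) :=
  P.extend (b := {a}) (by simp)
    (by simpa using ha)
    (by rw [sup_eq_union, union_comm]; exact (Finset.insert_eq a s).symm)

lemma addSingleton_parts (P : Finpartition s) (ha : a ∉ s) :
    (addSingleton P ha).parts = insert {a} P.parts := rfl

/-- Add `a` to the existing block `b`. -/
def addToPart (P : Finpartition s) (ha : a ∉ s) {b : Finset X} (hb : b ∈ P.parts) :
    Finpartition (insert a s) :=
  (P.avoid b).extend (b := insert a b)
    (by simp)
    (by rw [disjoint_insert_right]; exact ⟨fun h => ha (sdiff_subset h), sdiff_disjoint⟩)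
    (by rw [sup_eq_union, union_insert, sdiff_union_of_subset (P.le hb)])

lemma addToPart_parts (P : Finpartition s) (ha : a ∉ s) {b : Finset X} (hb : b ∈ P.parts) :
    (addToPart P ha hb).parts = insert (insert a b) (P.parts.erase b) := by
  simp [addToPart, Finpartition.extend, avoid_parts_of_mem hb]

/-- Total-function version of `addToPart`. -/
def addToPartFun (P : Finpartition s) (ha : a ∉ s) (b : Finset X) :
    Finpartition (insert a s) :=
  if hb : b ∈ P.parts then addToPart P ha hb else addSingleton P ha

/-- Remove `a` from a finpartition of `insert a s`. -/
def restrict (Q : Finpartition (insert a s)) (ha : a ∉ s) : Finpartition s :=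
  (Q.avoid {a}).copy (by rw [← erase_eq, erase_insert ha])

lemma restrict_parts (Q : Finpartition (insert a s)) (ha : a ∉ s) :
    (restrict Q ha).parts = (Q.avoid {a}).parts := rfl

/-- Structure of `avoid {a}` when the part `t` containing `a` is not `{a}`. -/
lemma avoid_singleton_parts {Q : Finpartition u} {t : Finset X} (ht : t ∈ Q.parts)
    (hat : a ∈ t) (hta : t ≠ {a}) :
    (Q.avoid {a}).parts = insert (t.erase a) (Q.parts.erase t) := by
  ext c
  rw [Finpartition.mem_avoid, mem_insert, mem_erase]
  constructor
  · rintro ⟨d, hd, hdb, rfl⟩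
    rcases eq_or_ne d t with rfl | hne
    · left; rw [erase_eq]
    · right
      have had : a ∉ d := fun h => hne (Q.eq_of_mem_parts hd ht h hat)
      rw [sdiff_singleton_eq_erase, erase_eq_of_notMem had]
      exact ⟨hne, hd⟩
  · rintro (rfl | ⟨hne, hc⟩)
    · refine ⟨t, ht, fun hle => ?_, (erase_eq t a).symm⟩
      exact hta (le_antisymm hle (singleton_subset_iff.2 hat))
    · have had : a ∉ c := fun h => hne (Q.eq_of_mem_parts hc ht h hat)
      refine ⟨c, hc, fun hle => ?_, ?_⟩
      · obtain ⟨x, hx⟩ := Q.nonempty_of_mem_parts hc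
        exact had (mem_singleton.1 (hle hx) ▸ hx)
      · rw [sdiff_singleton_eq_erase, erase_eq_of_notMem had]

variable {X : Type*} [DecidableEq X] {s : Finset X} {a : X}

lemma singleton_not_mem_parts (P : Finpartition s) (ha : a ∉ s) : {a} ∉ P.parts :=
  fun h => ha (P.le h (mem_singleton_self a))

lemma addSingleton_part (P : Finpartition s) (ha : a ∉ s) :
    (addSingleton P ha).part a = {a} :=
  Finpartition.part_eq_of_mem _ (mem_insert_self _ _) (mem_singleton_self a)

/-- S1 -/
lemma restrict_addSingleton (P : Finpartition s) (ha : a ∉ s) :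
    restrict (addSingleton P ha) ha = P := by
  apply Finpartition.ext
  rw [restrict_parts, avoid_parts_of_mem (by rw [addSingleton_parts]; exact mem_insert_self _ _),
    addSingleton_parts, erase_insert (singleton_not_mem_parts P ha)]

/-- S2 -/
lemma addSingleton_restrict (Q : Finpartition (insert a s)) (ha : a ∉ s)
    (h : Q.part a = {a}) : addSingleton (restrict Q ha) ha = Q := by
  have hmem : ({a} : Finset X) ∈ Q.parts := h ▸ Q.part_mem.2 (mem_insert_self a s)
  apply Finpartition.ext
  rw [addSingleton_parts, restrict_parts, avoid_parts_of_mem hmem, insert_erase hmem]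

lemma insert_ne_singleton {P : Finpartition s} {b : Finset X} (hb : b ∈ P.parts)
    (ha : a ∉ s) : insert a b ≠ {a} := by
  intro h
  obtain ⟨x, hx⟩ := P.nonempty_of_mem_parts hb
  have hxa : x = a := by
    have : x ∈ insert a b := mem_insert_of_mem hx
    rwa [h, mem_singleton] at this
  exact ha (hxa ▸ P.le hb hx)

lemma addToPart_part (P : Finpartition s) (ha : a ∉ s) {b : Finset X} (hb : b ∈ P.parts) :
    (addToPart P ha hb).part a = insert a b :=
  Finpartition.part_eq_of_mem _
    (by rw [addToPart_parts]; exact mem_insert_self _ _) (mem_insert_self a b)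

/-- T1 -/
lemma restrict_addToPart (P : Finpartition s) (ha : a ∉ s) {b : Finset X}
    (hb : b ∈ P.parts) : restrict (addToPart P ha hb) ha = P := by
  have hab : a ∉ b := not_mem_of_mem_parts hb ha
  apply Finpartition.ext
  rw [restrict_parts,
    avoid_singleton_parts (t := insert a b)
      (by rw [addToPart_parts]; exact mem_insert_self _ _) (mem_insert_self a b)
      (insert_ne_singleton hb ha),
    addToPart_parts, erase_insert hab,
    erase_insert (fun h => ha (P.le (mem_of_mem_erase h) (mem_insert_self a b))),
    insert_erase hb]


lemma erase_part_nonempty (Q : Finpartition (insert a s)) (h : Q.part a ≠ {a}) :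
    ((Q.part a).erase a).Nonempty := by
  have hat : a ∈ Q.part a := Q.mem_part (mem_insert_self a s)
  rcases ((Q.part a).erase a).eq_empty_or_nonempty with he | hne
  · rcases (erase_eq_empty_iff _ _).1 he with h0 | h1
    · exact absurd h0 (Finset.nonempty_iff_ne_empty.1 ⟨a, hat⟩)
    · exact absurd h1 h
  · exact hne

lemma erase_part_mem_restrict (Q : Finpartition (insert a s)) (ha : a ∉ s)
    (h : Q.part a ≠ {a}) : (Q.part a).erase a ∈ (restrict Q ha).parts := by
  rw [restrict_parts,
    avoid_singleton_parts (Q.part_mem.2 (mem_insert_self a s)) (Q.mem_part (mem_insert_self a s)) h]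
  exact mem_insert_self _ _

/-- T2 -/
lemma addToPart_restrict (Q : Finpartition (insert a s)) (ha : a ∉ s)
    (h : Q.part a ≠ {a}) :
    addToPart (restrict Q ha) ha (erase_part_mem_restrict Q ha h) = Q := by
  have hat : a ∈ Q.part a := Q.mem_part (mem_insert_self a s)
  have ht : Q.part a ∈ Q.parts := Q.part_mem.2 (mem_insert_self a s)
  have hb' : (Q.part a).erase a ∉ Q.parts := by
    intro hmem
    have hne : (Q.part a).erase a ≠ Q.part a := fun he =>
      (he ▸ notMem_erase a (Q.part a)) hat
    have := Q.disjoint hmem ht hne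
    obtain ⟨x, hx⟩ := erase_part_nonempty Q h
    exact (Finset.disjoint_left.1 this) hx (erase_subset a _ hx)
  apply Finpartition.ext
  rw [addToPart_parts, insert_erase hat, restrict_parts,
    avoid_singleton_parts ht hat h,
    erase_insert (fun hmem => hb' (mem_of_mem_erase hmem)),
    insert_erase ht]


lemma W_addSingleton (α θ : ℝ) (P : Finpartition s) (ha : a ∉ s) :
    W α θ (addSingleton P ha) = (θ + P.parts.card * α) * W α θ P := by
  unfold W
  rw [addSingleton_parts, card_insert_of_notMem (singleton_not_mem_parts P ha),
    prod_range_succ, prod_insert (singleton_not_mem_parts P ha)]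
  norm_num
  ring

lemma prod_range_shift (m : ℕ) (hm : 1 ≤ m) (α : ℝ) :
    ∏ i ∈ Finset.range m, ((i : ℝ) + 1 - α)
      = (∏ i ∈ Finset.range (m - 1), ((i : ℝ) + 1 - α)) * ((m : ℝ) - α) := by
  obtain ⟨k, rfl⟩ : ∃ k, m = k + 1 := ⟨m - 1, (Nat.succ_pred_eq_of_pos hm).symm⟩
  rw [prod_range_succ, Nat.add_sub_cancel]
  push_cast
  ring

lemma W_addToPart (α θ : ℝ) (P : Finpartition s) (ha : a ∉ s) {b : Finset X}
    (hb : b ∈ P.parts) :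
    W α θ (addToPart P ha hb) = ((b.card : ℝ) - α) * W α θ P := by
  have hab : a ∉ b := not_mem_of_mem_parts hb ha
  have hb1 : 1 ≤ b.card := card_pos.2 (P.nonempty_of_mem_parts hb)
  have hmem : insert a b ∉ P.parts.erase b :=
    fun h => ha (P.le (mem_of_mem_erase h) (mem_insert_self a b))
  unfold W
  rw [addToPart_parts, card_insert_of_notMem hmem, card_erase_of_mem hb,
    Nat.sub_add_cancel (card_pos.2 ⟨b, hb⟩), prod_insert hmem,
    card_insert_of_notMem hab, Nat.add_sub_cancel,
    prod_range_shift b.card hb1, ← mul_prod_erase P.parts _ hb]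
  ring


lemma step (α θ : ℝ) (s : Finset X) (a : X) (ha : a ∉ s) :
    ∑ Q : Finpartition (insert a s), W α θ Q
      = (θ + s.card) * ∑ P : Finpartition s, W α θ P := by
  classical
  rw [← Finset.sum_filter_add_sum_filter_not Finset.univ
    (fun Q : Finpartition (insert a s) => Q.part a = {a}) (W α θ)]
  have h1 : ∑ Q ∈ Finset.univ.filter
        (fun Q : Finpartition (insert a s) => Q.part a = {a}), W α θ Q
      = ∑ P : Finpartition s, (θ + P.parts.card * α) * W α θ P := by
    refine Finset.sum_nbij' (fun Q => restrict Q ha) (fun P => addSingleton P ha)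
      (fun Q _ => mem_univ _) (fun P _ => ?_) (fun Q hQ => ?_) (fun P _ => ?_) (fun Q hQ => ?_)
    · simp only [mem_filter, mem_univ, true_and]
      exact addSingleton_part P ha
    · simp only [mem_filter, mem_univ, true_and] at hQ
      exact addSingleton_restrict Q ha hQ
    · exact restrict_addSingleton P ha
    · simp only [mem_filter, mem_univ, true_and] at hQ
      conv_lhs => rw [← addSingleton_restrict Q ha hQ]
      rw [W_addSingleton]
  have h2 : ∑ Q ∈ Finset.univ.filter
        (fun Q : Finpartition (insert a s) => ¬ Q.part a = {a}), W α θ Q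
      = ∑ x ∈ (Finset.univ : Finset (Finpartition s)).sigma (fun P => P.parts),
          ((x.2.card : ℝ) - α) * W α θ x.1 := by
    refine Finset.sum_nbij'
      (fun Q => (⟨restrict Q ha, (Q.part a).erase a⟩ : Σ _ : Finpartition s, Finset X))
      (fun x => addToPartFun x.1 ha x.2)
      (fun Q hQ => ?_) (fun x hx => ?_) (fun Q hQ => ?_) (fun x hx => ?_) (fun Q hQ => ?_)
    · simp only [mem_filter, mem_univ, true_and] at hQ
      exact mem_sigma.2 ⟨mem_univ _, erase_part_mem_restrict Q ha hQ⟩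
    · obtain ⟨P, b⟩ := x
      have hb : b ∈ P.parts := (mem_sigma.1 hx).2
      simp only [mem_filter, mem_univ, true_and, addToPartFun, dif_pos hb]
      rw [addToPart_part P ha hb]
      exact insert_ne_singleton hb ha
    · simp only [mem_filter, mem_univ, true_and] at hQ
      simp only [addToPartFun, dif_pos (erase_part_mem_restrict Q ha hQ)]
      exact addToPart_restrict Q ha hQ
    · obtain ⟨P, b⟩ := x
      have hb : b ∈ P.parts := (mem_sigma.1 hx).2
      simp only [addToPartFun, dif_pos hb]
      refine Sigma.ext (restrict_addToPart P ha hb) (heq_of_eq ?_)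
      rw [addToPart_part P ha hb, erase_insert (not_mem_of_mem_parts hb ha)]
    · simp only [mem_filter, mem_univ, true_and] at hQ
      conv_lhs => rw [← addToPart_restrict Q ha hQ]
      rw [W_addToPart]
  rw [h1, h2, Finset.sum_sigma, ← Finset.sum_add_distrib, Finset.mul_sum]
  refine Finset.sum_congr rfl fun P _ => ?_
  dsimp only
  rw [← Finset.sum_mul]
  have hsum : ∑ b ∈ P.parts, ((b.card : ℝ) - α)
      = (s.card : ℝ) - P.parts.card * α := by
    rw [Finset.sum_sub_distrib, Finset.sum_const, nsmul_eq_mul, ← Nat.cast_sum,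
      P.sum_card_parts]
  rw [hsum]
  ring


lemma total (α θ : ℝ) (s : Finset X) :
    ∑ P : Finpartition s, W α θ P = risingFactorial θ s.card := by
  induction s using Finset.induction_on with
  | empty =>
      haveI : Unique (Finpartition (∅ : Finset X)) :=
        Finset.bot_eq_empty (α := X) ▸ inferInstance
      rw [Fintype.sum_unique]
      have hparts : (default : Finpartition (∅ : Finset X)).parts = ∅ :=
        Finpartition.parts_eq_empty_iff.2 Finset.bot_eq_empty.symm
      simp [W, hparts, risingFactorial]
  | @insert a s ha ih =>
      rw [step α θ s a ha, ih, card_insert_of_notMem ha]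
      unfold risingFactorial
      rw [prod_range_succ]
      ring

end PitmanAux

/-- Normalization of Pitman's two-parameter `(α,θ)` partition distribution: the weights
`W(P) = [∏_{i=0}^{#P−1}(θ+iα)] ∏_{b∈P} ∏_{i=1}^{#b−1}(i−α)` on set partitions of `[n]`
sum to `θ^{↑n}`. -/
theorem pitman_two_parameter_normalization (n : ℕ) (hn : 1 ≤ n) (α θ : ℝ) :
    ∑ P : Finpartition (Finset.univ : Finset (Fin n)),
      (∏ i ∈ Finset.range P.parts.card, (θ + i * α)) *
        ∏ b ∈ P.parts, ∏ i ∈ Finset.range (b.card - 1), ((i : ℝ) + 1 - α) =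
    risingFactorial θ n := by
  have h := PitmanAux.total α θ (Finset.univ : Finset (Fin n))
  rw [Finset.card_univ, Fintype.card_fin] at h
  exact h
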